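/- arXiv:1302.6659 — 2 statements merged into one kernel-verified Lean document; each statement's English description precedes it below -/
import Mathlib

section
/- Let y be an integer with 0 ≤ y ≤ n−1, let v ∈ [0,1), and let c ∈ (0,1). If θ_R, θ_CP ∈ (0,1) satisfy (1−v) F_{θ_R}(y−1) + v F_{θ_R}(y) = c and F_{θ_CP}(y) = c, then θ_R < θ_CP. (The upper endpoint of the randomized confidence interval is strictly smaller than the Clopper–Pearson upper endpoint.) -/
/-- The Binomial(n, θ) probability mass function `f_θ(y) = C(n,y) θ^y (1-θ)^(n-y)`. -/
noncomputable def binomP (n : ℕ) (θ : ℝ) (y : ℕ) : ℝ :=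
  (n.choose y : ℝ) * θ ^ y * (1 - θ) ^ (n - y)

/-- `F_θ(y-1) = ∑_{j=0}^{y-1} f_θ(j)`, with the convention `F_θ(-1) = 0`. -/
noncomputable def binomCDFpred (n : ℕ) (θ : ℝ) (y : ℕ) : ℝ :=
  ∑ j ∈ Finset.range y, binomP n θ j

/-- The Binomial(n, θ) cumulative distribution function `F_θ(y) = ∑_{j=0}^{y} f_θ(j)`. -/
noncomputable def binomCDF (n : ℕ) (θ : ℝ) (y : ℕ) : ℝ :=
  ∑ j ∈ Finset.range (y + 1), binomP n θ j

noncomputable def gAux (n : ℕ) (θ : ℝ) (j : ℕ) : ℝ :=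
  (n : ℝ) * ((n-1).choose j : ℝ) * θ ^ j * (1 - θ) ^ (n - 1 - j)

lemma choose_mul_left (n j : ℕ) (hn : 1 ≤ n) (hj : 1 ≤ j) :
    (n.choose j : ℝ) * j = n * ((n-1).choose (j-1)) := by
  have h := Nat.add_one_mul_choose_eq (n-1) (j-1)
  rw [Nat.sub_add_cancel hn,
    Nat.sub_add_cancel hj] at h
  exact_mod_cast h.symm

lemma choose_mul_right (n j : ℕ) (hn : 1 ≤ n) :
    (n.choose j : ℝ) * ((n - j : ℕ) : ℝ) = n * ((n-1).choose j) := by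
  have h1 := Nat.choose_succ_right_eq n j
  have h2 := Nat.add_one_mul_choose_eq (n-1) j
  rw [Nat.sub_add_cancel hn] at h2
  have : n.choose j * (n - j) = n * ((n-1).choose j) := by rw [← h1, h2]
  exact_mod_cast this

lemma hasDerivAt_binomP (n : ℕ) (hn : 1 ≤ n) (j : ℕ) (θ : ℝ) :
    HasDerivAt (fun t => binomP n t j)
      ((if j = 0 then 0 else gAux n θ (j-1)) - gAux n θ j) θ := by
  have h1 : HasDerivAt (fun t : ℝ => t ^ j) ((j : ℝ) * θ ^ (j-1)) θ := hasDerivAt_pow j θ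
  have h2 : HasDerivAt (fun t : ℝ => (1 - t) ^ (n - j))
      (((n-j : ℕ) : ℝ) * (1 - θ) ^ (n - j - 1) * (-1)) θ :=
    ((hasDerivAt_id θ).const_sub 1).pow (n - j)
  have h3 := (h1.mul h2).const_mul ((n.choose j : ℝ))
  have heq : (fun t : ℝ => (n.choose j : ℝ) * (t ^ j * (1 - t) ^ (n - j))) =
      fun t => binomP n t j := by
    funext t; simp [binomP, mul_assoc]
  simp only [Pi.mul_apply] at h3
  rw [heq] at h3
  refine h3.congr_deriv (Eq.symm ?_)
  rcases Nat.eq_zero_or_pos j with hj | hj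
  · subst hj
    simp [gAux]
  · have hj1 : 1 ≤ j := hj
    rw [if_neg (by omega)]
    unfold gAux
    have e1 : n - 1 - (j - 1) = n - j := by omega
    have e2 : n - 1 - j = n - j - 1 := by omega
    rw [e1, e2]
    have hl := choose_mul_left n j hn hj1
    have hr := choose_mul_right n j hn
    linear_combination θ ^ j * (1-θ) ^ (n-j-1) * hr - θ ^ (j-1) * (1-θ) ^ (n-j) * hl

lemma hasDerivAt_binomCDF (n : ℕ) (hn : 1 ≤ n) (y : ℕ) (θ : ℝ) :
    HasDerivAt (fun t => binomCDF n t y) (-(gAux n θ y)) θ := by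
  have h : HasDerivAt (fun t => ∑ j ∈ Finset.range (y+1), binomP n t j)
      (∑ j ∈ Finset.range (y+1),
        ((if j = 0 then 0 else gAux n θ (j-1)) - gAux n θ j)) θ :=
    HasDerivAt.fun_sum fun j _ => hasDerivAt_binomP n hn j θ
  have key : ∑ j ∈ Finset.range (y+1),
      ((if j = 0 then 0 else gAux n θ (j-1)) - gAux n θ j) = -(gAux n θ y) := by
    have h2 := Finset.sum_range_sub'
      (fun j => if j = 0 then (0:ℝ) else gAux n θ (j-1)) (y+1)
    simpa using h2
  rw [key] at h
  exact h

lemma binomCDF_strictAnti (n : ℕ) (hn : 1 ≤ n) (y : ℕ) (hy : y ≤ n - 1) :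
    StrictAntiOn (fun θ => binomCDF n θ y) (Set.Icc 0 1) := by
  apply strictAntiOn_of_deriv_neg (convex_Icc 0 1)
  · exact fun x _ => ((hasDerivAt_binomCDF n hn y x).continuousAt).continuousWithinAt
  · intro x hx
    rw [interior_Icc] at hx
    rw [(hasDerivAt_binomCDF n hn y x).deriv]
    have hcp : (0:ℝ) < ((n-1).choose y : ℝ) := by exact_mod_cast Nat.choose_pos hy
    have hnp : (0:ℝ) < n := by exact_mod_cast hn
    have hxp : 0 < x := hx.1
    have hx1 : 0 < 1 - x := by linarith [hx.2]
    have : 0 < gAux n x y := by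
      unfold gAux
      exact mul_pos (mul_pos (mul_pos hnp hcp) (pow_pos hxp y)) (pow_pos hx1 _)
    linarith

/-- For `0 ≤ y ≤ n-1`, `v ∈ [0,1)`, `c ∈ (0,1)`: if `θ_R, θ_CP ∈ (0,1)` satisfy
`(1-v) F_{θ_R}(y-1) + v F_{θ_R}(y) = c` and `F_{θ_CP}(y) = c`, then `θ_R < θ_CP`
(the randomized upper endpoint is strictly smaller than the Clopper–Pearson one). -/
theorem stmt_8 (n : ℕ) (hn : 1 ≤ n) (y : ℕ) (hy : y ≤ n - 1)
    (v : ℝ) (hv : v ∈ Set.Ico (0 : ℝ) 1) (c : ℝ) (hc : c ∈ Set.Ioo (0 : ℝ) 1)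
    (θR θCP : ℝ) (hθR : θR ∈ Set.Ioo (0 : ℝ) 1) (hθCP : θCP ∈ Set.Ioo (0 : ℝ) 1)
    (hR : (1 - v) * binomCDFpred n θR y + v * binomCDF n θR y = c)
    (hCP : binomCDF n θCP y = c) :
    θR < θCP := by
  obtain ⟨hv0, hv1⟩ := hv
  have hfpos : 0 < binomP n θR y := by
    unfold binomP
    have hcp : (0:ℝ) < (n.choose y : ℝ) := by
      exact_mod_cast Nat.choose_pos (le_trans hy (Nat.sub_le n 1))
    exact mul_pos (mul_pos hcp (pow_pos hθR.1 y))
      (pow_pos (by linarith [hθR.2]) _)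
  have hsplit : binomCDF n θR y = binomCDFpred n θR y + binomP n θR y := by
    unfold binomCDF binomCDFpred; rw [Finset.sum_range_succ]
  have hgt : c < binomCDF n θR y := by nlinarith [hfpos, hsplit, hR]
  have hanti := binomCDF_strictAnti n hn y hy
  by_contra hle
  push_neg at hle
  rcases eq_or_lt_of_le hle with h | h
  · rw [h] at hCP; linarith
  · have hm1 : θCP ∈ Set.Icc (0:ℝ) 1 := ⟨le_of_lt hθCP.1, le_of_lt hθCP.2⟩
    have hm2 : θR ∈ Set.Icc (0:ℝ) 1 := ⟨le_of_lt hθR.1, le_of_lt hθR.2⟩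
    have := hanti hm1 hm2 h
    simp only at this
    linarith
end

section
/- Let θ ∈ (0,1), and let M : {0,…,n} → ℕ with M(y) ≥ 1 for all y. Then for every t ∈ [0,1], Σ_{y=0}^{n} Σ_{k=0}^{M(y)−1} (f_θ(y)/M(y)) · 𝟙[(1 − k/M(y))·f_θ(y) + (1 − F_θ(y)) ≤ t] ≤ t. (If, conditional on Y = y, W̃ is uniformly distributed on {0, 1/M(y), …, (M(y)−1)/M(y)}, then the discrete randomized lower-tail p-value (1−W̃)·f_θ(Y) + 1 − F_θ(Y) is stochastically larger than a Uniform(0,1) random variable.) -/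
lemma binomP_nonneg (n : ℕ) (θ : ℝ) (hθ : θ ∈ Set.Ioo (0 : ℝ) 1) (y : ℕ) :
    0 ≤ binomP n θ y := by
  have h1 : (0:ℝ) ≤ θ := hθ.1.le
  have h2 : (0:ℝ) ≤ 1 - θ := by linarith [hθ.2]
  unfold binomP
  positivity

lemma sum_binomP (n : ℕ) (θ : ℝ) :
    ∑ y ∈ Finset.range (n + 1), binomP n θ y = 1 := by
  have h := add_pow θ (1 - θ) n
  have h2 : θ + (1 - θ) = 1 := by ring
  rw [h2, one_pow] at h
  rw [h]
  apply Finset.sum_congr rfl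
  intro y _
  unfold binomP
  ring

lemma tail_eq (n : ℕ) (θ : ℝ) (y : ℕ) (hy : y ≤ n) :
    1 - binomCDF n θ y = ∑ j ∈ Finset.Ico (y + 1) (n + 1), binomP n θ j := by
  have hsplit : ∑ j ∈ Finset.range (y+1), binomP n θ j
      + ∑ j ∈ Finset.Ico (y+1) (n+1), binomP n θ j
      = ∑ j ∈ Finset.range (n+1), binomP n θ j :=
    Finset.sum_range_add_sum_Ico _ (by omega)
  rw [sum_binomP] at hsplit
  unfold binomCDF
  linarith

/-- For `θ ∈ (0,1)`, `M : {0,…,n} → ℕ` with `M(y) ≥ 1`, and every `t ∈ [0,1]`: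
`∑_{y=0}^{n} ∑_{k=0}^{M(y)-1} (f_θ(y)/M(y)) 𝟙[(1 - k/M(y)) f_θ(y) + (1 - F_θ(y)) ≤ t] ≤ t`
(the discrete randomized lower-tail p-value `(1-W̃) f_θ(Y) + 1 - F_θ(Y)` is stochastically
larger than a `U(0,1)` random variable). -/
theorem stmt_14 (n : ℕ) (hn : 1 ≤ n) (θ : ℝ) (hθ : θ ∈ Set.Ioo (0 : ℝ) 1)
    (M : ℕ → ℕ) (hM : ∀ y ≤ n, 1 ≤ M y) (t : ℝ) (ht : t ∈ Set.Icc (0 : ℝ) 1) :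
    ∑ y ∈ Finset.range (n + 1), ∑ k ∈ Finset.range (M y),
      binomP n θ y / (M y : ℝ) *
        (if (1 - (k : ℝ) / (M y : ℝ)) * binomP n θ y + (1 - binomCDF n θ y) ≤ t
          then (1 : ℝ) else 0) ≤ t := by
  classical
  set f : ℕ → ℝ := binomP n θ with hf
  have hf0 : ∀ y, 0 ≤ f y := binomP_nonneg n θ hθ
  set P : ℕ → ℕ → ℝ := fun y k =>
    (1 - (k : ℝ) / (M y : ℝ)) * f y + (1 - binomCDF n θ y) with hPdef
  set S : Finset ℕ :=
    (Finset.range (n + 1)).filter (fun y => ∃ k ∈ Finset.range (M y), P y k ≤ t)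
    with hSdef
  by_cases hS : S.Nonempty
  · -- minimal y with a hit
    set y0 := S.min' hS with hy0def
    have hy0S : y0 ∈ S := S.min'_mem hS
    have hy0n : y0 ≤ n := by
      have := (Finset.mem_filter.mp hy0S).1
      simpa [Finset.mem_range, Nat.lt_succ_iff] using this
    set K : Finset ℕ :=
      (Finset.range (M y0)).filter (fun k => P y0 k ≤ t) with hKdef
    have hK : K.Nonempty := by
      obtain ⟨k, hk, hkt⟩ := (Finset.mem_filter.mp hy0S).2
      exact ⟨k, Finset.mem_filter.mpr ⟨hk, hkt⟩⟩
    set k0 := K.min' hK with hk0def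
    have hk0K : k0 ∈ K := K.min'_mem hK
    have hk0M : k0 < M y0 := by
      have := (Finset.mem_filter.mp hk0K).1
      simpa [Finset.mem_range] using this
    have hP0 : P y0 k0 ≤ t := (Finset.mem_filter.mp hk0K).2
    have hMy0 : (0:ℝ) < (M y0 : ℝ) := by
      have := hM y0 hy0n
      exact_mod_cast Nat.lt_of_lt_of_le Nat.zero_lt_one this
    -- termwise bound function
    set g : ℕ → ℝ := fun y =>
      if y < y0 then 0
      else if y = y0 then (1 - (k0 : ℝ) / (M y0 : ℝ)) * f y0
      else f y with hgdef
    have hmass : ∀ y, 0 ≤ f y / (M y : ℝ) := fun y =>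
      div_nonneg (hf0 y) (Nat.cast_nonneg _)
    have hstep : ∀ y ∈ Finset.range (n + 1),
        (∑ k ∈ Finset.range (M y),
          f y / (M y : ℝ) * (if P y k ≤ t then (1:ℝ) else 0)) ≤ g y := by
      intro y hy
      have hyn : y ≤ n := by simpa [Finset.mem_range, Nat.lt_succ_iff] using hy
      have hMy : (0:ℝ) < (M y : ℝ) := by
        have := hM y hyn
        exact_mod_cast Nat.lt_of_lt_of_le Nat.zero_lt_one this
      rcases lt_trichotomy y y0 with hlt | heq | hgt
      · -- y < y0 : no hits
        have hyS : y ∉ S := fun hyS => absurd (S.min'_le y hyS) (by omega)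
        have hno : ∀ k ∈ Finset.range (M y), ¬ P y k ≤ t := by
          intro k hk hkt
          exact hyS (Finset.mem_filter.mpr ⟨hy, ⟨k, hk, hkt⟩⟩)
        have : (∑ k ∈ Finset.range (M y),
            f y / (M y : ℝ) * (if P y k ≤ t then (1:ℝ) else 0)) = 0 := by
          apply Finset.sum_eq_zero
          intro k hk
          simp [hno k hk]
        rw [this, hgdef]
        simp [hlt]
      · -- y = y0
        rw [heq] at *
        clear heq
        have hbound : ∀ k ∈ Finset.range (M y0),
            f y0 / (M y0 : ℝ) * (if P y0 k ≤ t then (1:ℝ) else 0)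
              ≤ (if k < k0 then 0 else f y0 / (M y0 : ℝ)) := by
          intro k hk
          by_cases hkk : k < k0
          · have : ¬ P y0 k ≤ t := by
              intro hkt
              have := K.min'_le k (Finset.mem_filter.mpr ⟨hk, hkt⟩)
              omega
            simp [this, hkk]
          · simp only [hkk, if_false]
            by_cases hkt : P y0 k ≤ t <;> simp [hkt, hmass y0]
        have e1 : (∑ k ∈ Finset.range (M y0), (if k < k0 then (0:ℝ) else f y0 / (M y0 : ℝ)))
            = ∑ k ∈ Finset.Ico k0 (M y0), f y0 / (M y0 : ℝ) := by
          rw [Finset.range_eq_Ico,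
            ← Finset.sum_Ico_consecutive _ (Nat.zero_le k0) (le_of_lt hk0M)]
          have hA : (∑ k ∈ Finset.Ico 0 k0, (if k < k0 then (0:ℝ) else f y0 / (M y0 : ℝ))) = 0 :=
            Finset.sum_eq_zero (fun k hk => by simp [(Finset.mem_Ico.mp hk).2])
          have hB : (∑ k ∈ Finset.Ico k0 (M y0), (if k < k0 then (0:ℝ) else f y0 / (M y0 : ℝ)))
              = ∑ k ∈ Finset.Ico k0 (M y0), f y0 / (M y0 : ℝ) :=
            Finset.sum_congr rfl (fun k hk => by
              simp [not_lt.mpr (Finset.mem_Ico.mp hk).1])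
          rw [hA, hB, zero_add]
        have e2 : (∑ k ∈ Finset.Ico k0 (M y0), f y0 / (M y0 : ℝ))
            = (1 - (k0 : ℝ) / (M y0 : ℝ)) * f y0 := by
          rw [Finset.sum_const, Nat.card_Ico, nsmul_eq_mul]
          push_cast [le_of_lt hk0M]
          field_simp
        have e3 : g y0 = (1 - (k0 : ℝ) / (M y0 : ℝ)) * f y0 := by simp [hgdef]
        calc (∑ k ∈ Finset.range (M y0),
            f y0 / (M y0 : ℝ) * (if P y0 k ≤ t then (1:ℝ) else 0))
            ≤ ∑ k ∈ Finset.range (M y0), (if k < k0 then (0:ℝ) else f y0 / (M y0 : ℝ)) :=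
              Finset.sum_le_sum hbound
          _ = g y0 := by rw [e1, e2, e3]
      · -- y > y0 : bound indicator by 1
        have : (∑ k ∈ Finset.range (M y),
            f y / (M y : ℝ) * (if P y k ≤ t then (1:ℝ) else 0))
            ≤ ∑ k ∈ Finset.range (M y), f y / (M y : ℝ) := by
          apply Finset.sum_le_sum
          intro k _
          by_cases hkt : P y k ≤ t <;> simp [hkt, hmass y]
        have hsum : (∑ _k ∈ Finset.range (M y), f y / (M y : ℝ)) = f y := by
          rw [Finset.sum_const, Finset.card_range, nsmul_eq_mul]
          field_simp
        rw [hgdef]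
        have h1 : ¬ y < y0 := by omega
        have h2 : y ≠ y0 := by omega
        simp only [h1, if_false, h2]
        linarith
    have hsumg : ∑ y ∈ Finset.range (n + 1), g y = P y0 k0 := by
      have hsplit : ∑ y ∈ Finset.range (n + 1), g y
          = ∑ y ∈ Finset.range y0, g y + ∑ y ∈ Finset.Ico y0 (n+1), g y :=
        (Finset.sum_range_add_sum_Ico _ (by omega)).symm
      have h1 : ∑ y ∈ Finset.range y0, g y = 0 := by
        apply Finset.sum_eq_zero
        intro y hy
        have : y < y0 := Finset.mem_range.mp hy
        simp [hgdef, this]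
      have h2 : ∑ y ∈ Finset.Ico y0 (n+1), g y
          = g y0 + ∑ y ∈ Finset.Ico (y0+1) (n+1), g y := by
        rw [← Finset.sum_Ico_consecutive _ (by omega : y0 ≤ y0 + 1) (by omega)]
        simp
      have h3 : ∑ y ∈ Finset.Ico (y0+1) (n+1), g y
          = ∑ y ∈ Finset.Ico (y0+1) (n+1), f y := by
        apply Finset.sum_congr rfl
        intro y hy
        have hy' : y0 + 1 ≤ y := (Finset.mem_Ico.mp hy).1
        have ha : ¬ y < y0 := by omega
        have hb : y ≠ y0 := by omega
        simp [hgdef, ha, hb]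
      have h4 : ∑ y ∈ Finset.Ico (y0+1) (n+1), f y = 1 - binomCDF n θ y0 :=
        (tail_eq n θ y0 hy0n).symm
      have h5 : g y0 = (1 - (k0 : ℝ) / (M y0 : ℝ)) * f y0 := by
        simp [hgdef]
      rw [hsplit, h1, h2, h3, h4, h5, hPdef]
      ring
    calc ∑ y ∈ Finset.range (n + 1), ∑ k ∈ Finset.range (M y),
          f y / (M y : ℝ) * (if P y k ≤ t then (1:ℝ) else 0)
        ≤ ∑ y ∈ Finset.range (n + 1), g y := Finset.sum_le_sum hstep
      _ = P y0 k0 := hsumg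
      _ ≤ t := hP0
  · -- no hits anywhere: sum is 0
    have hzero : ∑ y ∈ Finset.range (n + 1), ∑ k ∈ Finset.range (M y),
        f y / (M y : ℝ) * (if P y k ≤ t then (1:ℝ) else 0) = 0 := by
      apply Finset.sum_eq_zero
      intro y hy
      apply Finset.sum_eq_zero
      intro k hk
      have : ¬ P y k ≤ t := by
        intro hkt
        exact hS ⟨y, Finset.mem_filter.mpr ⟨hy, ⟨k, hk, hkt⟩⟩⟩
      simp [this]
    rw [hzero]
    exact ht.1
end
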